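/- Let F : ℝ^d → (convex compact subsets of ℝ^d) be a set-valued map. Then F is L-Lipschitz w.r.t. the sup-norm Hausdorff distance if and only if the boundary map x ↦ ∂F(x) is L-Lipschitz w.r.t. the sup-norm Hausdorff distance, where ∂F(x) denotes the topological boundary of the convex compact set F(x). -/

import Mathlib

open Metric Set
open EMetric (hausdorffEdist hausdorffEdist_comm infEdist)

section FrontierHausdorff

variable {E : Type*} [NormedAddCommGroup E] [NormedSpace ℝ E]








/-- A linear functional on a finite-dimensional space attains its norm on the unit ball. -/
lemma exists_norming [FiniteDimensional ℝ E] (f : E →L[ℝ] ℝ) :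
    ∃ v : E, ‖v‖ ≤ 1 ∧ f v = ‖f‖ := by
  obtain ⟨v, hv, hmax'⟩ := (isCompact_closedBall (0 : E) 1).exists_isMaxOn
    ⟨0, mem_closedBall_self zero_le_one⟩ f.continuous.continuousOn
  have hmax : ∀ y ∈ closedBall (0:E) 1, f y ≤ f v := fun y hy => hmax' hy
  have hv1 : ‖v‖ ≤ 1 := by simpa [dist_eq_norm] using hv
  have hfv0 : 0 ≤ f v := by
    have := hmax 0 (mem_closedBall_self zero_le_one)
    simpa using this
  refine ⟨v, hv1, le_antisymm ?_ ?_⟩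
  · calc f v ≤ |f v| := le_abs_self _
      _ ≤ ‖f‖ * ‖v‖ := f.le_opNorm v
      _ ≤ ‖f‖ * 1 := by gcongr
      _ = ‖f‖ := mul_one _
  · refine f.opNorm_le_bound hfv0 fun x => ?_
    rcases eq_or_ne x 0 with rfl | hx
    · simp [hfv0]
    · have hxn : 0 < ‖x‖ := norm_pos_iff.2 hx
      have h1 : f ((‖x‖⁻¹) • x) ≤ f v := hmax _ (by
        simp [mem_closedBall, dist_eq_norm, norm_smul, abs_of_pos (inv_pos.2 hxn),
          inv_mul_cancel₀ hxn.ne'])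
      have h2 : f (-((‖x‖⁻¹) • x)) ≤ f v := hmax _ (by
        simp [mem_closedBall, dist_eq_norm, norm_smul, abs_of_pos (inv_pos.2 hxn),
          inv_mul_cancel₀ hxn.ne'])
      rw [map_smul, smul_eq_mul] at h1
      rw [map_neg, map_smul, smul_eq_mul] at h2
      have e1 : f x ≤ ‖x‖ * f v := by
        have := mul_le_mul_of_nonneg_left h1 hxn.le
        rwa [mul_inv_cancel_left₀ hxn.ne'] at this
      have e2 : -(f x) ≤ ‖x‖ * f v := by
        have := mul_le_mul_of_nonneg_left h2 hxn.le
        rwa [mul_neg, mul_inv_cancel_left₀ hxn.ne'] at this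
      have : |f x| ≤ ‖x‖ * f v := abs_le.2 ⟨by linarith, e1⟩
      simpa [Real.norm_eq_abs, mul_comm] using this







/-- The segment from a point outside a closed set to a point inside crosses the frontier. -/
lemma segment_exit {s : Set E} (hs : IsClosed s) {a b : E} (ha : a ∉ s) (hb : b ∈ s) :
    ∃ c ∈ frontier s, dist a c ≤ dist a b := by
  set γ : ℝ → E := fun t => a + t • (b - a) with hγ
  have hcont : Continuous γ := by fun_prop
  set K : Set ℝ := Icc 0 1 ∩ γ ⁻¹' s with hK
  have hKc : IsClosed K := isClosed_Icc.inter (hs.preimage hcont)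
  have h1K : (1 : ℝ) ∈ K := by simp [hK, hγ, hb]
  have hKbd : BddBelow K := ⟨0, fun t ht => ht.1.1⟩
  set t₀ : ℝ := sInf K with ht₀
  have ht₀K : t₀ ∈ K := hKc.csInf_mem ⟨1, h1K⟩ hKbd
  refine ⟨γ t₀, ⟨subset_closure ht₀K.2, ?_⟩, ?_⟩
  · intro hint
    have h0 : (0:ℝ) ∉ K := by simp [hK, hγ, ha]
    have ht₀pos : 0 < t₀ := lt_of_le_of_ne ht₀K.1.1 (fun h => h0 (h ▸ ht₀K))
    have : γ ⁻¹' interior s ∈ nhds t₀ :=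
      hcont.continuousAt.preimage_mem_nhds (isOpen_interior.mem_nhds hint)
    obtain ⟨ε, hε, hball⟩ := Metric.mem_nhds_iff.1 this
    set t₁ : ℝ := max 0 (t₀ - ε/2) with ht₁
    have ht₁K : t₁ ∈ K := by
      constructor
      · exact ⟨le_max_left _ _, max_le zero_le_one (by linarith [ht₀K.1.2])⟩
      · have hmem : t₁ ∈ γ ⁻¹' interior s := by
          apply hball
          simp only [mem_ball, Real.dist_eq, ht₁]
          rw [abs_lt]
          refine ⟨?_, ?_⟩
          · have h2 : t₀ - ε/2 ≤ (0:ℝ) ⊔ (t₀ - ε / 2) := le_max_right _ _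
            linarith
          · have h1 : (0:ℝ) ⊔ (t₀ - ε / 2) ≤ t₀ := max_le ht₀pos.le (by linarith)
            linarith
        exact mem_preimage.2 (interior_subset (mem_preimage.1 hmem))
    have := csInf_le hKbd ht₁K
    have ht₁lt : t₁ < t₀ := by
      apply max_lt ht₀pos; linarith
    linarith
  · have : γ t₀ - a = t₀ • (b - a) := by simp [hγ]
    rw [dist_comm, dist_eq_norm, this, norm_smul, Real.norm_eq_abs,
      abs_of_nonneg ht₀K.1.1, dist_comm, dist_eq_norm]
    calc t₀ * ‖b - a‖ ≤ 1 * ‖b - a‖ := by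
          apply mul_le_mul_of_nonneg_right ht₀K.1.2 (norm_nonneg _)
      _ = ‖b - a‖ := one_mul _

/-- A ray from a point of a compact set exits through the frontier. -/
lemma ray_exit {B : Set E} (hB : IsCompact B) {a v : E} (ha : a ∈ B) (hv : v ≠ 0) :
    ∃ t : ℝ, 0 ≤ t ∧ a + t • v ∈ frontier B := by
  set γ : ℝ → E := fun t => a + t • v with hγ
  have hcont : Continuous γ := by fun_prop
  set S : Set ℝ := Ici 0 ∩ γ ⁻¹' B with hS
  have hSc : IsClosed S := isClosed_Ici.inter (hB.isClosed.preimage hcont)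
  have h0S : (0:ℝ) ∈ S := by simp [hS, hγ, ha]
  obtain ⟨R, hR⟩ := hB.isBounded.subset_closedBall a
  have hSbd : BddAbove S := by
    refine ⟨R / ‖v‖, fun t ht => ?_⟩
    have h1 : dist (γ t) a ≤ R := by simpa [dist_comm] using hR ht.2
    have h2 : dist (γ t) a = t * ‖v‖ := by
      rw [dist_eq_norm, hγ]
      simp only [add_sub_cancel_left, norm_smul, Real.norm_eq_abs, abs_of_nonneg (mem_Ici.1 ht.1)]
    rw [h2] at h1
    rw [le_div_iff₀ (norm_pos_iff.2 hv)]
    exact h1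
  set t₀ : ℝ := sSup S with ht₀
  have ht₀S : t₀ ∈ S := hSc.csSup_mem ⟨0, h0S⟩ hSbd
  refine ⟨t₀, ht₀S.1, subset_closure ht₀S.2, ?_⟩
  intro hint
  have : γ ⁻¹' interior B ∈ nhds t₀ :=
    hcont.continuousAt.preimage_mem_nhds (isOpen_interior.mem_nhds hint)
  obtain ⟨ε, hε, hball⟩ := Metric.mem_nhds_iff.1 this
  have ht₁S : t₀ + ε/2 ∈ S := by
    have hmem : t₀ + ε/2 ∈ γ ⁻¹' interior B := by
      apply hball
      simp only [mem_ball, Real.dist_eq]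
      rw [abs_of_nonneg (by linarith)]
      linarith
    exact ⟨mem_Ici.2 (le_trans (mem_Ici.1 ht₀S.1) (by linarith : t₀ ≤ t₀ + ε/2)), mem_preimage.2 (interior_subset (mem_preimage.1 hmem))⟩
  have := le_csSup hSbd ht₁S
  linarith






lemma extremePoints_subset_frontier [Nontrivial E] {A : Set E} :
    A.extremePoints ℝ ⊆ frontier A := by
  intro x hx
  refine ⟨subset_closure hx.1, fun hint => ?_⟩
  obtain ⟨ε, hε, hball⟩ := Metric.mem_nhds_iff.1 (mem_interior_iff_mem_nhds.1 hint)
  obtain ⟨v, hv⟩ := exists_ne (0 : E)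
  set w : E := (ε / (2 * ‖v‖)) • v with hw
  have hvn : 0 < ‖v‖ := norm_pos_iff.2 hv
  have hwn : ‖w‖ = ε / 2 := by
    rw [hw, norm_smul, Real.norm_eq_abs, abs_of_pos (by positivity)]
    field_simp
  have hw0 : w ≠ 0 := by
    intro h
    rw [h, norm_zero] at hwn
    linarith
  have h1 : x + w ∈ A := hball (by simp [mem_ball, dist_eq_norm, hwn]; linarith)
  have h2 : x - w ∈ A := hball (by
    simp only [mem_ball, dist_eq_norm]
    rw [sub_sub_cancel_left, norm_neg, hwn]
    linarith)
  have hseg : x ∈ openSegment ℝ (x - w) (x + w) := by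
    refine ⟨1/2, 1/2, by norm_num, by norm_num, by norm_num, ?_⟩
    rw [smul_sub, smul_add]
    module
  have heq : x - w = x := (hx.2 h2 h1 hseg)
  exact hw0 (by simpa [sub_eq_self] using heq)








lemma mem_cthickening_iff_infDist' {x : E} {s : Set E} (hs : s.Nonempty) {r : ℝ} (hr : 0 ≤ r) :
    x ∈ cthickening r s ↔ infDist x s ≤ r := by
  rw [mem_cthickening_iff]
  exact ENNReal.le_ofReal_iff_toReal_le (infEdist_ne_top hs) hr


lemma hausdorffDist_le_frontier [Nontrivial E] [FiniteDimensional ℝ E]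
    {A B : Set E} (hAne : A.Nonempty) (hBne : B.Nonempty)
    (hAcv : Convex ℝ A) (hBcv : Convex ℝ B) (hAcp : IsCompact A) (hBcp : IsCompact B) :
    hausdorffDist A B ≤ hausdorffDist (frontier A) (frontier B) := by
  have hpc : PreconnectedSpace E := ⟨(convex_univ : Convex ℝ (univ : Set E)).isPreconnected⟩
  have hfA : (frontier A).Nonempty := nonempty_frontier_iff.2 ⟨hAne, hAcp.ne_univ⟩
  have hfB : (frontier B).Nonempty := nonempty_frontier_iff.2 ⟨hBne, hBcp.ne_univ⟩
  have hedist : hausdorffEdist (frontier A) (frontier B) ≠ ⊤ :=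
    hausdorffEdist_ne_top_of_nonempty_of_bounded hfA hfB
      (hAcp.isBounded.subset hAcp.isClosed.frontier_subset)
      (hBcp.isBounded.subset hBcp.isClosed.frontier_subset)
  set r := hausdorffDist (frontier A) (frontier B) with hrdef
  have hr : 0 ≤ r := hausdorffDist_nonneg
  have main : ∀ C D : Set E, C.Nonempty → D.Nonempty → Convex ℝ C → Convex ℝ D →
      IsCompact C → IsCompact D → hausdorffEdist (frontier C) (frontier D) ≠ ⊤ →
      ∀ x ∈ C, infDist x D ≤ hausdorffDist (frontier C) (frontier D) := by
    intro C D hCne hDne hCcv hDcv hCcp hDcp hed x hx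
    set ρ := hausdorffDist (frontier C) (frontier D) with hρdef
    have hρ : 0 ≤ ρ := hausdorffDist_nonneg
    have hfD : (frontier D).Nonempty := nonempty_frontier_iff.2 ⟨hDne, hDcp.ne_univ⟩
    have h1 : frontier C ⊆ cthickening ρ D := by
      intro y hy
      rw [mem_cthickening_iff_infDist' hDne hρ]
      calc infDist y D ≤ infDist y (frontier D) :=
            infDist_le_infDist_of_subset hDcp.isClosed.frontier_subset hfD
        _ ≤ ρ := infDist_le_hausdorffDist_of_mem hy hed
    have h2 : C ⊆ cthickening ρ D := by
      have hsub2 : convexHull ℝ (C.extremePoints ℝ) ⊆ cthickening ρ D :=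
        convexHull_min (extremePoints_subset_frontier.trans h1) (hDcv.cthickening ρ)
      calc C = closure (convexHull ℝ (C.extremePoints ℝ)) :=
            (closure_convexHull_extremePoints hCcp hCcv).symm
        _ ⊆ cthickening ρ D := closure_minimal hsub2 isClosed_cthickening
    exact (mem_cthickening_iff_infDist' hDne hρ).1 (h2 hx)
  apply hausdorffDist_le_of_infDist hr
  · exact main A B hAne hBne hAcv hBcv hAcp hBcp hedist
  · intro y hy
    have := main B A hBne hAne hBcv hAcv hBcp hAcp (by unfold EMetric.hausdorffEdist; rwa [hausdorffEdist_comm]) y hy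
    rwa [hausdorffDist_comm] at this







lemma infDist_frontier_le [FiniteDimensional ℝ E] {A B : Set E}
    (hAne : A.Nonempty) (hBne : B.Nonempty) (hAcv : Convex ℝ A)
    (hAcp : IsCompact A) (hBcp : IsCompact B) {a : E} (ha : a ∈ frontier A) :
    infDist a (frontier B) ≤ hausdorffDist A B := by
  have hedist : hausdorffEdist A B ≠ ⊤ :=
    hausdorffEdist_ne_top_of_nonempty_of_bounded hAne hBne hAcp.isBounded hBcp.isBounded
  set r := hausdorffDist A B with hrdef
  have hr : 0 ≤ r := hausdorffDist_nonneg
  refine le_of_forall_pos_le_add fun ε hε => ?_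
  by_cases hint : a ∈ interior B
  · -- a is in the interior of B : walk along a ray separating from A
    have haB : a ∈ B := interior_subset hint
    have haA : a ∈ A := hAcp.isClosed.frontier_subset ha
    have hacl : a ∈ closure Aᶜ := by
      rw [closure_compl]
      exact ha.2
    obtain ⟨z, hz, hdz⟩ := Metric.mem_closure_iff.1 hacl ε hε
    obtain ⟨f, c, hfc, hcz⟩ := geometric_hahn_banach_closed_point hAcv hAcp.isClosed hz
    have hf0 : f ≠ 0 := by
      intro h
      have h1 := hfc a haA
      rw [h] at h1 hcz
      simp only [ContinuousLinearMap.zero_apply] at h1 hcz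
      linarith
    have hfn : 0 < ‖f‖ := norm_pos_iff.2 hf0
    obtain ⟨v, hv1, hfv⟩ := exists_norming f
    have hvne : v ≠ 0 := by
      rintro rfl
      rw [map_zero] at hfv
      exact hfn.ne hfv
    obtain ⟨t, ht0, htB⟩ := ray_exit hBcp haB hvne
    set b := a + t • v with hb
    have hbB : b ∈ B := hBcp.isClosed.frontier_subset htB
    obtain ⟨q, hqA, hq⟩ := hAcp.exists_infDist_eq_dist hAne b
    have hdbq : dist b q ≤ r := by
      rw [← hq, hrdef, hausdorffDist_comm]
      exact infDist_le_hausdorffDist_of_mem hbB (by rwa [hausdorffEdist_comm])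
    have e1 : f b - f q ≤ ‖f‖ * r := by
      calc f b - f q = f (b - q) := (map_sub f b q).symm
        _ ≤ |f (b - q)| := le_abs_self _
        _ ≤ ‖f‖ * ‖b - q‖ := f.le_opNorm _
        _ = ‖f‖ * dist b q := by rw [dist_eq_norm]
        _ ≤ ‖f‖ * r := by gcongr
    have e2 : f z - f a ≤ ‖f‖ * ε := by
      calc f z - f a = f (z - a) := (map_sub f z a).symm
        _ ≤ |f (z - a)| := le_abs_self _
        _ ≤ ‖f‖ * ‖z - a‖ := f.le_opNorm _
        _ = ‖f‖ * dist a z := by rw [dist_comm, dist_eq_norm]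
        _ ≤ ‖f‖ * ε := by gcongr
    have e3 : f b = f a + t * ‖f‖ := by
      rw [hb, map_add, map_smul, smul_eq_mul, hfv]
    have e4 : f q < c := hfc q hqA
    have e5 : c < f z := hcz
    have ht : t < r + ε := by
      have h6 : t * ‖f‖ < (r + ε) * ‖f‖ := by nlinarith
      exact lt_of_mul_lt_mul_right h6 hfn.le
    have hab : dist a b ≤ t := by
      rw [hb, dist_eq_norm]
      simp only [add_sub_cancel_left, sub_add_cancel_left, norm_neg, norm_smul,
        Real.norm_eq_abs, abs_of_nonneg ht0]
      calc t * ‖v‖ ≤ t * 1 := by gcongr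
        _ = t := mul_one t
    calc infDist a (frontier B) ≤ dist a b := infDist_le_dist_of_mem htB
      _ ≤ t := hab
      _ ≤ r + ε := ht.le
  · by_cases haB : a ∈ B
    · have hfb : a ∈ frontier B := ⟨subset_closure haB, hint⟩
      calc infDist a (frontier B) ≤ dist a a := infDist_le_dist_of_mem hfb
        _ = 0 := dist_self a
        _ ≤ r + ε := by linarith
    · have haA : a ∈ A := hAcp.isClosed.frontier_subset ha
      obtain ⟨b, hbB, hbd⟩ := hBcp.exists_infDist_eq_dist hBne a
      have h1 : dist a b ≤ r := by
        rw [← hbd]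
        exact infDist_le_hausdorffDist_of_mem haA hedist
      obtain ⟨cc, hcf, hcd⟩ := segment_exit hBcp.isClosed haB hbB
      calc infDist a (frontier B) ≤ dist a cc := infDist_le_dist_of_mem hcf
        _ ≤ dist a b := hcd
        _ ≤ r + ε := by linarith

lemma frontier_hausdorffDist_eq [Nontrivial E] [FiniteDimensional ℝ E]
    {A B : Set E} (hAne : A.Nonempty) (hBne : B.Nonempty)
    (hAcv : Convex ℝ A) (hBcv : Convex ℝ B) (hAcp : IsCompact A) (hBcp : IsCompact B) :
    hausdorffDist (frontier A) (frontier B) = hausdorffDist A B := by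
  refine le_antisymm ?_ (hausdorffDist_le_frontier hAne hBne hAcv hBcv hAcp hBcp)
  apply hausdorffDist_le_of_infDist hausdorffDist_nonneg
  · exact fun x hx => infDist_frontier_le hAne hBne hAcv hAcp hBcp hx
  · intro x hx
    have := infDist_frontier_le hBne hAne hBcv hBcp hAcp hx
    rwa [hausdorffDist_comm] at this

theorem stmt17 {d : ℕ} (F : (Fin d → ℝ) → Set (Fin d → ℝ))
    (hne : ∀ x, (F x).Nonempty) (hcv : ∀ x, Convex ℝ (F x))
    (hcp : ∀ x, IsCompact (F x)) (L : ℝ) :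
    (∀ x y, hausdorffDist (F x) (F y) ≤ L * dist x y) ↔
    (∀ x y, hausdorffDist (frontier (F x)) (frontier (F y)) ≤ L * dist x y) := by
  rcases Nat.eq_zero_or_pos d with hd | hd
  · subst hd
    have huniv : ∀ x, F x = univ := fun x => by
      obtain ⟨w, hw⟩ := hne x
      exact eq_univ_of_forall fun v => by rwa [Subsingleton.elim v w]
    constructor <;> intro _ x y <;>
      [skip; skip] <;>
      · have hxy : x = y := Subsingleton.elim x y
        subst hxy
        rw [huniv x]
        simp [Metric.hausdorffDist_self_zero]
  · haveI : Nonempty (Fin d) := ⟨⟨0, hd⟩⟩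
    haveI : Nontrivial (Fin d → ℝ) := inferInstance
    have key : ∀ x y, hausdorffDist (frontier (F x)) (frontier (F y))
        = hausdorffDist (F x) (F y) := fun x y =>
      frontier_hausdorffDist_eq (hne x) (hne y) (hcv x) (hcv y) (hcp x) (hcp y)
    constructor <;> intro h x y
    · rw [key]
      exact h x y
    · rw [← key]
      exact h x y

end FrontierHausdorff
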